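/- Let X₁,…,X_d be independent with X_i ~ N(m_i, 1), and for λ ≥ 0 define the soft-thresholding estimator η_λ(X)_i = sign(X_i)(|X_i| − λ)⁺. Then SURE(λ) := d + ∑_{i=1}^d (|X_i| ∧ λ)² − 2·#{i : |X_i| ≤ λ} is an unbiased estimator of the risk: E[SURE(λ)] = E[∑_{i=1}^d (η_λ(X)_i − m_i)²]. -/

import Mathlib

open MeasureTheory ProbabilityTheory Real

open Filter Set
open scoped ENNReal NNReal

section SureAux

noncomputable def G (m x : ℝ) : ℝ := (Real.sqrt (2 * π))⁻¹ * Real.exp (-(x - m)^2 / 2)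

lemma G_eq (m : ℝ) : gaussianPDFReal m 1 = G m := by
  funext x; simp [gaussianPDFReal, G]

lemma G_pos (m x : ℝ) : 0 < G m x := by
  have h : 0 < Real.sqrt (2 * π) := Real.sqrt_pos.2 (by positivity)
  exact mul_pos (inv_pos.2 h) (Real.exp_pos _)

lemma continuous_G (m : ℝ) : Continuous (G m) := by
  unfold G; fun_prop

lemma hasDerivAt_negG (m x : ℝ) : HasDerivAt (fun x => -G m x) ((x - m) * G m x) x := by
  have h1 : HasDerivAt (fun x : ℝ => -(x - m)^2 / 2) (-(x - m)) x := by
    have := (((hasDerivAt_id x).sub_const m).fun_pow 2).fun_neg.div_const 2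
    refine this.congr_deriv ?_; simp only [id_eq]; ring
  have := (h1.exp.const_mul ((Real.sqrt (2 * π))⁻¹)).fun_neg
  refine this.congr_deriv ?_
  unfold G; ring

lemma hasDerivAt_negxG (m x : ℝ) :
    HasDerivAt (fun x => -((x - m) * G m x)) ((x - m)^2 * G m x - G m x) x := by
  have h1 : HasDerivAt (fun x : ℝ => x - m) 1 x := (hasDerivAt_id x).sub_const m
  have h2 : HasDerivAt (G m) (-((x - m) * G m x)) x := by
    have := (hasDerivAt_negG m x).fun_neg
    simpa using this
  have := (h1.fun_mul h2).fun_neg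
  refine this.congr_deriv ?_
  ring

lemma hasDerivAt_negIdG (m x : ℝ) :
    HasDerivAt (fun x => -(x * G m x)) (x * (x - m) * G m x - G m x) x := by
  have h2 : HasDerivAt (G m) (-((x - m) * G m x)) x := by
    simpa using (hasDerivAt_negG m x).fun_neg
  have := ((hasDerivAt_id x).fun_mul h2).fun_neg
  refine this.congr_deriv ?_
  simp only [id_eq]; ring

lemma tendsto_mul_exp : Tendsto (fun y : ℝ => y * Real.exp (-y^2 / 2)) atTop (nhds 0) := by
  apply squeeze_zero' (g := fun y : ℝ => y * Real.exp (-y))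
  · filter_upwards [eventually_ge_atTop (0:ℝ)] with y hy
    positivity
  · filter_upwards [eventually_ge_atTop (2:ℝ)] with y hy
    have : Real.exp (-y^2/2) ≤ Real.exp (-y) := by
      apply Real.exp_le_exp.2; nlinarith
    exact mul_le_mul_of_nonneg_left this (by linarith)
  · simpa using Real.tendsto_pow_mul_exp_neg_atTop_nhds_zero 1

lemma tendsto_abs_sub_atTop (m : ℝ) : Tendsto (fun x : ℝ => |x - m|) atTop atTop :=
  tendsto_abs_atTop_atTop.comp (tendsto_atTop_add_const_right _ (-m) tendsto_id)

lemma tendsto_abs_sub_atBot (m : ℝ) : Tendsto (fun x : ℝ => |x - m|) atBot atTop :=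
  tendsto_abs_atBot_atTop.comp (tendsto_atBot_add_const_right _ (-m) tendsto_id)

lemma tendsto_xG (m : ℝ) {l : Filter ℝ} (h : Tendsto (fun x : ℝ => |x - m|) l atTop) :
    Tendsto (fun x => (x - m) * G m x) l (nhds 0) := by
  rw [tendsto_zero_iff_norm_tendsto_zero]
  have key : Tendsto (fun t : ℝ => (Real.sqrt (2 * π))⁻¹ * (t * Real.exp (-t^2/2))) atTop (nhds 0) := by
    simpa using tendsto_mul_exp.const_mul ((Real.sqrt (2 * π))⁻¹)
  have := key.comp h
  apply this.congr
  intro x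
  have h1 : 0 < (Real.sqrt (2 * π))⁻¹ := inv_pos.2 (Real.sqrt_pos.2 (by positivity))
  simp only [Function.comp]
  rw [Real.norm_eq_abs, abs_mul]
  unfold G
  rw [abs_mul, abs_of_pos h1, abs_of_pos (Real.exp_pos _), sq_abs]
  ring

lemma tendsto_G (m : ℝ) {l : Filter ℝ} (h : Tendsto (fun x : ℝ => |x - m|) l atTop) :
    Tendsto (fun x => G m x) l (nhds 0) := by
  have key : Tendsto (fun t : ℝ => (Real.sqrt (2 * π))⁻¹ * Real.exp (-t^2/2)) atTop (nhds 0) := by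
    have h1 : Tendsto (fun t : ℝ => -t^2/2) atTop atBot := by
      exact Tendsto.atBot_div_const (by norm_num)
        (tendsto_neg_atTop_atBot.comp (tendsto_pow_atTop (two_ne_zero)))
    simpa using (Real.tendsto_exp_atBot.comp h1).const_mul ((Real.sqrt (2 * π))⁻¹)
  have := key.comp h
  apply this.congr
  intro x
  simp only [Function.comp]
  unfold G
  rw [sq_abs]

lemma integrable_G (m : ℝ) : Integrable (G m) := by
  rw [← G_eq]; exact integrable_gaussianPDFReal m 1

lemma integrable_xG (m : ℝ) : Integrable (fun x => (x - m) * G m x) := by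
  have h := (integrable_mul_exp_neg_mul_sq (b := 1/2) (by norm_num)).comp_sub_right m
  have := h.const_mul ((Real.sqrt (2 * π))⁻¹)
  apply this.congr
  apply Eventually.of_forall
  intro x
  unfold G; ring_nf

lemma integrable_sqG (m : ℝ) : Integrable (fun x => (x - m)^2 * G m x) := by
  have h0 : Integrable (fun x : ℝ => x ^ (2:ℝ) * Real.exp (-(1/2) * x^2)) :=
    integrable_rpow_mul_exp_neg_mul_sq (by norm_num) (by norm_num)
  have h := h0.comp_sub_right m
  have := h.const_mul ((Real.sqrt (2 * π))⁻¹)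
  apply this.congr
  apply Eventually.of_forall
  intro x
  simp only [Real.rpow_two]
  unfold G; ring_nf

lemma int_xG_Iic (m a : ℝ) : ∫ x in Iic a, (x - m) * G m x = -G m a := by
  have := integral_Iic_of_hasDerivAt_of_tendsto' (a := a)
    (f := fun x => -G m x) (f' := fun x => (x - m) * G m x)
    (fun x _ => hasDerivAt_negG m x) ((integrable_xG m).integrableOn)
    (by simpa using (tendsto_G m (tendsto_abs_sub_atBot m)).neg)
  simpa using this

lemma int_xG_Ioi (m a : ℝ) : ∫ x in Ioi a, (x - m) * G m x = G m a := by
  have := integral_Ioi_of_hasDerivAt_of_tendsto' (a := a)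
    (f := fun x => -G m x) (f' := fun x => (x - m) * G m x)
    (fun x _ => hasDerivAt_negG m x) ((integrable_xG m).integrableOn)
    (by simpa using (tendsto_G m (tendsto_abs_sub_atTop m)).neg)
  simpa using this

lemma integrable_idxG (m : ℝ) : Integrable (fun x => x * (x - m) * G m x) := by
  have : Integrable (fun x => ((x - m)^2 * G m x) + m * ((x - m) * G m x)) :=
    (integrable_sqG m).add ((integrable_xG m).const_mul m)
  apply this.congr
  apply Eventually.of_forall
  intro x; ring

lemma int_mid (m l : ℝ) :
    ∫ x in (-l)..l, (x * (x - m) * G m x - G m x) = -(l * G m l) - (l * G m (-l)) := by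
  have := intervalIntegral.integral_eq_sub_of_hasDerivAt (a := -l) (b := l)
    (f := fun x => -(x * G m x)) (f' := fun x => x * (x - m) * G m x - G m x)
    (fun x _ => hasDerivAt_negIdG m x)
    (((integrable_idxG m).sub (integrable_G m)).intervalIntegrable)
  rw [this]; ring

lemma int_sqG (m : ℝ) : ∫ x, (x - m)^2 * G m x = ∫ x, G m x := by
  have h := integral_of_hasDerivAt_of_tendsto
    (f := fun x => -((x - m) * G m x)) (f' := fun x => (x - m)^2 * G m x - G m x)
    (fun x => hasDerivAt_negxG m x) ((integrable_sqG m).sub (integrable_G m))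
    (by simpa using (tendsto_xG m (tendsto_abs_sub_atBot m)).neg)
    (by simpa using (tendsto_xG m (tendsto_abs_sub_atTop m)).neg)
  rw [integral_sub (integrable_sqG m) (integrable_G m)] at h
  linarith

lemma int_G_eq_one (m : ℝ) : ∫ x, G m x = 1 := by
  rw [← G_eq]; exact integral_gaussianPDFReal_eq_one m one_ne_zero

lemma measurable_realSign : Measurable Real.sign := by
  unfold Real.sign
  exact Measurable.ite (measurableSet_lt measurable_id measurable_const) measurable_const
    (Measurable.ite (measurableSet_lt measurable_const measurable_id) measurable_const
      measurable_const)

lemma integrable_dom (m : ℝ) {F : ℝ → ℝ} (hF : Measurable F) (A B : ℝ)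
    (hbd : ∀ x, |F x| ≤ A + B * (x - m)^2) :
    Integrable (fun x => F x * G m x) := by
  have hDom : Integrable (fun x => A * G m x + B * ((x - m)^2 * G m x)) :=
    ((integrable_G m).const_mul A).add ((integrable_sqG m).const_mul B)
  apply Integrable.mono' hDom (hF.mul (continuous_G m).measurable).aestronglyMeasurable
  apply Eventually.of_forall
  intro x
  rw [Real.norm_eq_abs, Pi.mul_apply, abs_mul, abs_of_pos (G_pos m x)]
  have h1 := hbd x
  have h2 := (G_pos m x).le
  nlinarith [abs_nonneg (F x)]

/-- soft threshold decomposition -/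
lemma soft_eq {l : ℝ} (hl : 0 ≤ l) (x : ℝ) :
    Real.sign x * max (|x| - l) 0 = x - Real.sign x * min |x| l := by
  rcases lt_trichotomy x 0 with h | h | h
  · rw [Real.sign_of_neg h, abs_of_neg h]
    rcases le_total (-x) l with h2 | h2
    · rw [max_eq_right (by linarith), min_eq_left h2]; ring
    · rw [max_eq_left (by linarith), min_eq_right h2]; ring
  · subst h; simp
  · rw [Real.sign_of_pos h, abs_of_pos h]
    rcases le_total x l with h2 | h2
    · rw [max_eq_right (by linarith), min_eq_left h2]; ring
    · rw [max_eq_left (by linarith), min_eq_right h2]; ring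

lemma sign_min_sq {l : ℝ} (hl : 0 ≤ l) (x : ℝ) :
    (Real.sign x * min |x| l)^2 = (min |x| l)^2 := by
  rcases lt_trichotomy x 0 with h | h | h
  · rw [Real.sign_of_neg h]; ring
  · subst h; simp [min_eq_left hl]
  · rw [Real.sign_of_pos h]; ring

lemma g_of_le_neg {l x : ℝ} (hl : 0 ≤ l) (hx : x ≤ -l) :
    Real.sign x * min |x| l = -l := by
  rcases lt_or_eq_of_le hx with h | h
  · have hx0 : x < 0 := lt_of_lt_of_le h (by linarith)
    rw [Real.sign_of_neg hx0, abs_of_neg hx0, min_eq_right (by linarith)]; ring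
  · rcases lt_or_eq_of_le hl with h0 | h0
    · have hx0 : x < 0 := by rw [h]; linarith
      rw [Real.sign_of_neg hx0, abs_of_neg hx0, min_eq_right (by linarith)]; ring
    · have : x = 0 := by rw [h, ← h0]; ring
      subst this; simp [← h0]

lemma g_of_lt_pos {l x : ℝ} (hl : 0 ≤ l) (hx : l < x) :
    Real.sign x * min |x| l = l := by
  have hx0 : 0 < x := lt_of_le_of_lt hl hx
  rw [Real.sign_of_pos hx0, abs_of_pos hx0, min_eq_right (by linarith)]; ring

lemma g_of_abs_le {l x : ℝ} (hx : |x| ≤ l) :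
    Real.sign x * min |x| l = x := by
  rw [min_eq_left hx]
  rcases lt_trichotomy x 0 with h | h | h
  · rw [Real.sign_of_neg h, abs_of_neg h]; ring
  · subst h; simp
  · rw [Real.sign_of_pos h, abs_of_pos h]; ring

lemma abs_g_le {l : ℝ} (hl : 0 ≤ l) (x : ℝ) : |Real.sign x * min |x| l| ≤ l := by
  rw [abs_mul]
  have h1 : |Real.sign x| ≤ 1 := by
    rcases Real.sign_apply_eq x with h | h | h <;> rw [h] <;> norm_num
  have h2 : |min |x| l| ≤ l := by
    rw [abs_of_nonneg (le_min (abs_nonneg x) hl)]; exact min_le_right _ _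
  calc |Real.sign x| * |min |x| l| ≤ 1 * l := by
        apply mul_le_mul h1 h2 (abs_nonneg _) zero_le_one
    _ = l := one_mul l

lemma measurable_g (l : ℝ) : Measurable (fun x : ℝ => Real.sign x * min |x| l) :=
  measurable_realSign.mul (continuous_abs.measurable.min measurable_const)

lemma integrable_steinInt (m l : ℝ) (hl : 0 ≤ l) :
    Integrable (fun x => ((x - m) * (Real.sign x * min |x| l)) * G m x) := by
  apply integrable_dom m (F := fun x => (x - m) * (Real.sign x * min |x| l))
    (by exact (measurable_id.sub measurable_const).mul (measurable_g l)) l l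
  intro x
  rw [abs_mul]
  have h1 := abs_g_le hl x
  have h2 : |x - m| ≤ 1 + (x - m)^2 := by nlinarith [abs_nonneg (x - m), sq_abs (x - m)]
  nlinarith [abs_nonneg (x - m), abs_nonneg (Real.sign x * min |x| l)]

lemma stein (m l : ℝ) (hl : 0 ≤ l) :
    ∫ x, ((x - m) * (Real.sign x * min |x| l)) * G m x = ∫ x in (-l)..l, G m x := by
  have hInt := integrable_steinInt m l hl
  have hll : (-l : ℝ) ≤ l := by linarith
  rw [← intervalIntegral.integral_Iic_add_Ioi (hInt.integrableOn) (hInt.integrableOn),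
    ← Set.Ioc_union_Ioi_eq_Ioi hll,
    setIntegral_union (Set.Ioc_disjoint_Ioi le_rfl) measurableSet_Ioi
      hInt.integrableOn hInt.integrableOn]
  have p1 : ∫ x in Iic (-l), ((x - m) * (Real.sign x * min |x| l)) * G m x
      = l * G m (-l) := by
    rw [setIntegral_congr_fun measurableSet_Iic
      (g := fun x => (-l) * ((x - m) * G m x))
      (fun x hx => by rw [g_of_le_neg hl hx]; ring)]
    rw [MeasureTheory.integral_const_mul, int_xG_Iic]; ring
  have p3 : ∫ x in Ioi l, ((x - m) * (Real.sign x * min |x| l)) * G m x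
      = l * G m l := by
    rw [setIntegral_congr_fun measurableSet_Ioi
      (g := fun x => l * ((x - m) * G m x))
      (fun x hx => by rw [g_of_lt_pos hl hx]; ring)]
    rw [MeasureTheory.integral_const_mul, int_xG_Ioi]
  have p2 : ∫ x in Ioc (-l) l, ((x - m) * (Real.sign x * min |x| l)) * G m x
      = (-(l * G m l) - l * G m (-l)) + ∫ x in (-l)..l, G m x := by
    rw [setIntegral_congr_fun measurableSet_Ioc
      (g := fun x => x * (x - m) * G m x)
      (fun x hx => by rw [g_of_abs_le (abs_le.2 ⟨hx.1.le, hx.2⟩)]; ring)]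
    rw [← intervalIntegral.integral_of_le hll]
    have hsplit : ∫ x in (-l)..l, x * (x - m) * G m x
        = (∫ x in (-l)..l, (x * (x - m) * G m x - G m x)) + ∫ x in (-l)..l, G m x := by
      rw [intervalIntegral.integral_sub ((integrable_idxG m).intervalIntegrable)
        ((integrable_G m).intervalIntegrable)]
      ring
    rw [hsplit, int_mid]
  rw [p1, p2, p3]; ring

lemma integral_gaussianReal_eq (m : ℝ) (F : ℝ → ℝ) :
    ∫ x, F x ∂(gaussianReal m 1) = ∫ x, F x * G m x := by
  rw [gaussianReal_of_var_ne_zero m one_ne_zero]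
  rw [show (volume.withDensity (gaussianPDF m 1))
      = volume.withDensity (fun x => ((gaussianPDFReal m 1 x).toNNReal : ℝ≥0∞)) from rfl]
  rw [integral_withDensity_eq_integral_smul (measurable_gaussianPDFReal m 1).real_toNNReal F]
  apply integral_congr_ae
  apply Eventually.of_forall
  intro x
  show (gaussianPDFReal m 1 x).toNNReal • F x = F x * G m x
  rw [NNReal.smul_def, smul_eq_mul, Real.coe_toNNReal _ (gaussianPDFReal_nonneg m 1 x),
    mul_comm, G_eq]

lemma integrable_gaussianReal_of_dom (m : ℝ) {F : ℝ → ℝ} (hF : Measurable F) (A B : ℝ)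
    (hbd : ∀ x, |F x| ≤ A + B * (x - m)^2) : Integrable F (gaussianReal m 1) := by
  rw [gaussianReal_of_var_ne_zero m one_ne_zero]
  rw [integrable_withDensity_iff (measurable_gaussianPDF m 1)
    (Filter.Eventually.of_forall fun x => ENNReal.ofReal_lt_top)]
  have heq : (fun x => F x * (gaussianPDF m 1 x).toReal) = fun x => F x * G m x := by
    funext x
    rw [gaussianPDF, ENNReal.toReal_ofReal (gaussianPDFReal_nonneg m 1 x), G_eq]
  rw [heq]
  exact integrable_dom m hF A B hbd

lemma key (m l : ℝ) (hl : 0 ≤ l) :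
    ∫ x, (1 + min |x| l ^ 2 - 2 * (if |x| ≤ l then (1:ℝ) else 0)) * G m x
      = ∫ x, (Real.sign x * max (|x| - l) 0 - m)^2 * G m x := by
  have hll : (-l : ℝ) ≤ l := by linarith
  have iMin : Integrable (fun x => min |x| l ^ 2 * G m x) := by
    apply integrable_dom m (F := fun x => min |x| l ^ 2)
      (by exact (continuous_abs.measurable.min measurable_const).pow_const 2) (l^2) 0
    intro x
    have h1 : 0 ≤ min |x| l := le_min (abs_nonneg x) hl
    have h2 : min |x| l ≤ l := min_le_right _ _
    rw [abs_of_nonneg (by positivity)]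
    nlinarith
  have iInd : Integrable (fun x => (if |x| ≤ l then (1:ℝ) else 0) * G m x) := by
    apply integrable_dom m (F := fun x => (if |x| ≤ l then (1:ℝ) else 0))
      (Measurable.ite (measurableSet_le continuous_abs.measurable measurable_const)
        measurable_const measurable_const) 1 0
    intro x
    split_ifs <;> norm_num
  have iStein := integrable_steinInt m l hl
  -- indicator integral
  have hind : ∫ x, (if |x| ≤ l then (1:ℝ) else 0) * G m x = ∫ x in (-l)..l, G m x := by
    have : (fun x => (if |x| ≤ l then (1:ℝ) else 0) * G m x)
        = Set.indicator (Icc (-l) l) (G m) := by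
      funext x
      rw [Set.indicator_apply]
      by_cases h : |x| ≤ l
      · rw [if_pos h, if_pos (by rw [mem_Icc]; exact abs_le.1 h), one_mul]
      · rw [if_neg h, if_neg (by rw [mem_Icc]; exact fun hc => h (abs_le.2 hc)), zero_mul]
    rw [this, integral_indicator measurableSet_Icc, MeasureTheory.integral_Icc_eq_integral_Ioc,
      ← intervalIntegral.integral_of_le hll]
  -- pointwise rewriting of RHS integrand
  have hpt : ∀ x : ℝ, (Real.sign x * max (|x| - l) 0 - m)^2 * G m x
      = ((x - m)^2 * G m x - 2 * (((x - m) * (Real.sign x * min |x| l)) * G m x))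
        + min |x| l ^ 2 * G m x := by
    intro x
    rw [soft_eq hl x]
    have h2 := sign_min_sq hl x
    have h3 : (x - Real.sign x * min |x| l - m)^2
        = (x - m)^2 - 2 * ((x - m) * (Real.sign x * min |x| l)) + (min |x| l)^2 := by
      rw [← h2]; ring
    rw [h3]; ring
  have hpt' : ∀ x : ℝ, (1 + min |x| l ^ 2 - 2 * (if |x| ≤ l then (1:ℝ) else 0)) * G m x
      = (G m x + min |x| l ^ 2 * G m x) - 2 * ((if |x| ≤ l then (1:ℝ) else 0) * G m x) := by
    intro x; ring
  rw [integral_congr_ae (Filter.Eventually.of_forall hpt'),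
    integral_congr_ae (Filter.Eventually.of_forall hpt)]
  have i1 : Integrable (fun x => G m x + min |x| l ^ 2 * G m x) := (integrable_G m).add iMin
  have i2 : Integrable (fun x => 2 * ((if |x| ≤ l then (1:ℝ) else 0) * G m x)) :=
    iInd.const_mul 2
  have i4 : Integrable (fun x => 2 * (((x - m) * (Real.sign x * min |x| l)) * G m x)) :=
    iStein.const_mul 2
  have i3 : Integrable
      (fun x => (x - m)^2 * G m x - 2 * (((x - m) * (Real.sign x * min |x| l)) * G m x)) :=
    (integrable_sqG m).sub i4
  rw [integral_sub i1 i2, integral_add (integrable_G m) iMin,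
    MeasureTheory.integral_const_mul, hind,
    integral_add i3 iMin, integral_sub (integrable_sqG m) i4,
    MeasureTheory.integral_const_mul, stein m l hl, int_sqG]
  ring

noncomputable def uF (l x : ℝ) : ℝ := 1 + min |x| l ^ 2 - 2 * (if |x| ≤ l then (1:ℝ) else 0)
noncomputable def vF (l mi x : ℝ) : ℝ := (Real.sign x * max (|x| - l) 0 - mi)^2

lemma measurable_uF (l : ℝ) : Measurable (uF l) := by
  unfold uF
  exact (measurable_const.add ((continuous_abs.measurable.min measurable_const).pow_const 2)).sub
    ((Measurable.ite (measurableSet_le continuous_abs.measurable measurable_const)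
      measurable_const measurable_const).const_mul 2)

lemma measurable_vF (l mi : ℝ) : Measurable (vF l mi) := by
  unfold vF
  exact ((measurable_realSign.mul
    ((continuous_abs.measurable.sub measurable_const).max measurable_const)).sub
    measurable_const).pow_const 2

lemma integrable_uF_gauss (mi l : ℝ) (hl : 0 ≤ l) : Integrable (uF l) (gaussianReal mi 1) := by
  apply integrable_gaussianReal_of_dom mi (measurable_uF l) (3 + l^2) 0
  intro x
  unfold uF
  have h1 : 0 ≤ min |x| l := le_min (abs_nonneg x) hl
  have h2 : min |x| l ≤ l := min_le_right _ _
  rw [abs_le]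
  split_ifs <;> constructor <;> nlinarith

lemma integrable_vF_gauss (mi l : ℝ) (hl : 0 ≤ l) :
    Integrable (vF l mi) (gaussianReal mi 1) := by
  apply integrable_gaussianReal_of_dom mi (measurable_vF l mi) (6 * mi^2) 4
  intro x
  unfold vF
  set s := Real.sign x * max (|x| - l) 0 with hs
  have hs2 : s^2 ≤ x^2 := by
    have h1 : |s| ≤ |x| := by
      rw [hs, abs_mul]
      have ha : |Real.sign x| ≤ 1 := by
        rcases Real.sign_apply_eq x with h | h | h <;> rw [h] <;> norm_num
      have hb : |max (|x| - l) 0| ≤ |x| := by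
        rw [abs_of_nonneg (le_max_right _ _)]
        exact max_le (by linarith [abs_nonneg x]) (abs_nonneg x)
      calc |Real.sign x| * |max (|x| - l) 0| ≤ 1 * |x| :=
            mul_le_mul ha hb (abs_nonneg _) zero_le_one
        _ = |x| := one_mul _
    calc s^2 = |s|^2 := (sq_abs s).symm
      _ ≤ |x|^2 := by nlinarith [abs_nonneg s]
      _ = x^2 := sq_abs x
  rw [abs_of_nonneg (sq_nonneg _)]
  nlinarith [sq_nonneg (s + mi), sq_nonneg (x - 2 * mi)]


end SureAux

/-- SURE for soft thresholding is unbiased: for `X₁,…,X_d` independent with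
`X_i ~ N(m_i, 1)` and soft-thresholding estimator
`η_λ(X)_i = sign(X_i)(|X_i|−λ)⁺`, with
`SURE(λ) = d + ∑ (|X_i| ∧ λ)² − 2 #{i : |X_i| ≤ λ}`, one has
`E[SURE(λ)] = E[∑ (η_λ(X)_i − m_i)²]`. -/
theorem sure_soft_threshold_unbiased
    {Ω : Type*} [MeasurableSpace Ω] {P : Measure Ω} [IsProbabilityMeasure P]
    (d : ℕ) (X : Fin d → Ω → ℝ) (m : Fin d → ℝ)
    (hmeas : ∀ i, Measurable (X i))
    (hIndep : iIndepFun X P)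
    (hLaw : ∀ i, Measure.map (X i) P = gaussianReal (m i) 1)
    (l : ℝ) (hl : 0 ≤ l) :
    ∫ ω, ((d : ℝ) + ∑ i, (min |X i ω| l) ^ 2
        - 2 * ((Finset.univ.filter fun i => |X i ω| ≤ l).card : ℝ)) ∂P
      = ∫ ω, ∑ i, (Real.sign (X i ω) * max (|X i ω| - l) 0 - m i) ^ 2 ∂P := by
  have huI : ∀ i, Integrable (fun ω => uF l (X i ω)) P := by
    intro i
    have h1 : Integrable (uF l) (Measure.map (X i) P) := by
      rw [hLaw i]; exact integrable_uF_gauss (m i) l hl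
    exact
      (integrable_map_measure (measurable_uF l).aestronglyMeasurable (hmeas i).aemeasurable).mp h1
  have hvI : ∀ i, Integrable (fun ω => vF l (m i) (X i ω)) P := by
    intro i
    have h1 : Integrable (vF l (m i)) (Measure.map (X i) P) := by
      rw [hLaw i]; exact integrable_vF_gauss (m i) l hl
    exact (integrable_map_measure (measurable_vF l (m i)).aestronglyMeasurable
      (hmeas i).aemeasurable).mp h1
  have step : ∀ i, ∫ ω, uF l (X i ω) ∂P = ∫ ω, vF l (m i) (X i ω) ∂P := by
    intro i
    rw [← integral_map (hmeas i).aemeasurable (measurable_uF l).aestronglyMeasurable,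
      ← integral_map (hmeas i).aemeasurable (measurable_vF l (m i)).aestronglyMeasurable,
      hLaw i, integral_gaussianReal_eq, integral_gaussianReal_eq]
    unfold uF vF
    exact key (m i) l hl
  calc ∫ ω, ((d : ℝ) + ∑ i, (min |X i ω| l) ^ 2
        - 2 * ((Finset.univ.filter fun i => |X i ω| ≤ l).card : ℝ)) ∂P
      = ∫ ω, ∑ i, uF l (X i ω) ∂P := by
        apply integral_congr_ae
        filter_upwards with ω
        have hcard : ((Finset.univ.filter fun i => |X i ω| ≤ l).card : ℝ)
            = ∑ i, (if |X i ω| ≤ l then (1:ℝ) else 0) := by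
          rw [Finset.card_filter]
          push_cast
          rfl
        unfold uF
        rw [hcard, Finset.sum_sub_distrib, Finset.sum_add_distrib, ← Finset.mul_sum]
        simp
    _ = ∑ i, ∫ ω, uF l (X i ω) ∂P := integral_finset_sum _ (fun i _ => huI i)
    _ = ∑ i, ∫ ω, vF l (m i) (X i ω) ∂P := Finset.sum_congr rfl (fun i _ => step i)
    _ = ∫ ω, ∑ i, vF l (m i) (X i ω) ∂P := (integral_finset_sum _ (fun i _ => hvI i)).symm
    _ = ∫ ω, ∑ i, (Real.sign (X i ω) * max (|X i ω| - l) 0 - m i) ^ 2 ∂P := by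
        unfold vF; rfl
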